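/- Let α, β, p, q, k > 0 with kp < 1 and kq > 1, and let T_c > 0. If y : [0,∞) → [0,∞) is differentiable and satisfies y'(t) ≤ -(γ(α,β,p,q,k)/T_c)·(α y(t)^p + β y(t)^q)^k at every t with y(t) > 0, then y(t) = 0 for all t ≥ T_c. -/

import Mathlib

open MeasureTheory Real Set intervalIntegral

-- real beta integral
lemma betaReal {a b : ℝ} (ha : 0 < a) (hb : 0 < b) :
    ∫ t in Ioo (0:ℝ) 1, t ^ (a-1) * (1-t) ^ (b-1) = Gamma a * Gamma b / Gamma (a+b) := by
  have key : Complex.betaIntegral a b =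
      ((∫ t in (0:ℝ)..1, t ^ (a-1) * (1-t) ^ (b-1) : ℝ) : ℂ) := by
    rw [Complex.betaIntegral, ← intervalIntegral.integral_ofReal]
    refine intervalIntegral.integral_congr fun x hx => ?_
    rw [uIcc_of_le (by norm_num)] at hx
    rw [← Complex.ofReal_one, ← Complex.ofReal_sub, ← Complex.ofReal_sub,
      ← Complex.ofReal_sub, ← Complex.ofReal_cpow hx.1 (a-1),
      ← Complex.ofReal_cpow (by linarith [hx.2]) (b-1), ← Complex.ofReal_mul]
  have h2 := Complex.Gamma_mul_Gamma_eq_betaIntegral (s := a) (t := b)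
    (by simpa using ha) (by simpa using hb)
  rw [key, ← Complex.ofReal_add, Complex.Gamma_ofReal, Complex.Gamma_ofReal,
    Complex.Gamma_ofReal, ← Complex.ofReal_mul, ← Complex.ofReal_mul] at h2
  have h3 := Complex.ofReal_injective h2
  have h4 : ∫ t in (0:ℝ)..1, t ^ (a-1) * (1-t) ^ (b-1)
      = ∫ t in Ioo (0:ℝ) 1, t ^ (a-1) * (1-t) ^ (b-1) := by
    rw [intervalIntegral.integral_of_le (by norm_num), MeasureTheory.integral_Ioc_eq_integral_Ioo]
  rw [h4] at h3
  rw [h3]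
  have : (0:ℝ) < Gamma (a+b) := Real.Gamma_pos_of_pos (by linarith)
  field_simp
open MeasureTheory Real Set intervalIntegral

lemma betaIoi {a b : ℝ} (ha : 0 < a) (hb : 0 < b) :
    ∫ u in Ioi (0:ℝ), u ^ (a-1) * (1+u) ^ (-(a+b)) =
    ∫ t in Ioo (0:ℝ) 1, t ^ (a-1) * (1-t) ^ (b-1) := by
  have hderiv : ∀ t ∈ Ioo (0:ℝ) 1,
      HasDerivWithinAt (fun t => t/(1-t)) (((1-t)^2)⁻¹) (Ioo 0 1) t := by
    intro t ht
    have h1 : (1:ℝ) - t ≠ 0 := by have := ht.2; intro h; linarith [ht.2]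
    have := (hasDerivAt_id t).div ((hasDerivAt_const t (1:ℝ)).sub (hasDerivAt_id t)) h1
    refine HasDerivWithinAt.congr_deriv this.hasDerivWithinAt ?_
    simp only [Pi.sub_apply, id]
    field_simp
    ring
  have hinj : InjOn (fun t : ℝ => t/(1-t)) (Ioo 0 1) := by
    intro t1 h1 t2 h2 he
    have n1 : (1:ℝ) - t1 ≠ 0 := by intro h; linarith [h1.2]
    have n2 : (1:ℝ) - t2 ≠ 0 := by intro h; linarith [h2.2]
    field_simp at he
    nlinarith [he]
  have himg : (fun t : ℝ => t/(1-t)) '' (Ioo 0 1) = Ioi 0 := by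
    ext u; constructor
    · rintro ⟨t, ht, rfl⟩
      exact div_pos ht.1 (by linarith [ht.2])
    · intro hu
      refine ⟨u/(1+u), ⟨div_pos hu (by linarith [mem_Ioi.mp hu]), ?_⟩, ?_⟩
      · rw [div_lt_one (by linarith [mem_Ioi.mp hu])]; linarith [mem_Ioi.mp hu]
      · have h1 : (1:ℝ) + u ≠ 0 := by have := mem_Ioi.mp hu; positivity
        field_simp
        ring
  have := integral_image_eq_integral_abs_deriv_smul measurableSet_Ioo hderiv hinj
    (fun u => u ^ (a-1) * (1+u) ^ (-(a+b)))
  rw [himg] at this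
  rw [this]
  refine setIntegral_congr_fun measurableSet_Ioo fun t ht => ?_
  have h0 : (0:ℝ) < t := ht.1
  have h1 : (0:ℝ) < 1 - t := by linarith [ht.2]
  have e1 : (1:ℝ) + t/(1-t) = (1-t)⁻¹ := by field_simp; ring
  rw [smul_eq_mul, abs_of_pos (by positivity), e1,
    Real.inv_rpow h1.le, ← Real.rpow_neg h1.le, neg_neg,
    Real.div_rpow h0.le h1.le]
  rw [show ((1-t)^2 : ℝ) = (1-t)^(((2:ℕ):ℝ)) from by rw [Real.rpow_natCast],
    ← Real.rpow_neg h1.le, div_eq_mul_inv, ← Real.rpow_neg h1.le]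
  rw [show (1-t)^(-((2:ℕ):ℝ)) * (t^(a-1) * (1-t)^(-(a-1)) * (1-t)^(a+b)) =
    t^(a-1) * ((1-t)^(-(a-1)) * ((1-t)^(a+b) * (1-t)^(-(((2:ℕ):ℝ))))) from by ring]
  rw [← Real.rpow_add h1, ← Real.rpow_add h1]
  congr 1
  push_cast; ring
open MeasureTheory Real Set intervalIntegral

lemma mainSubst {α β p q k : ℝ} (hα : 0 < α) (hβ : 0 < β) (hp : 0 < p) (hq : 0 < q)
    (hk : 0 < k) (hqp : p < q) :
    ∫ s in Ioi (0:ℝ), ((α * s ^ p + β * s ^ q) ^ k)⁻¹ =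
      (q-p)⁻¹ * (α ^ k)⁻¹ * (α/β) ^ ((1-k*p)/(q-p)) *
        ∫ u in Ioi (0:ℝ), u ^ ((1-k*p)/(q-p) - 1) * (1+u) ^ (-k) := by
  have hqp' : (0:ℝ) < q - p := by linarith
  set m : ℝ := (q-p)⁻¹ with hm_def
  have hm : 0 < m := inv_pos.mpr hqp'
  set a : ℝ := (1-k*p)/(q-p) with ha_def
  have hmqp : m * (q - p) = 1 := inv_mul_cancel₀ hqp'.ne'
  set g0 : ℝ → ℝ := fun s => ((α * s ^ p + β * s ^ q) ^ k)⁻¹ with hg0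
  have step1 := integral_comp_rpow_Ioi g0 (p := m) hm.ne'
  set F : ℝ → ℝ := fun x => (|m| * x ^ (m-1)) • g0 (x ^ m) with hF
  have step2 := integral_comp_mul_left_Ioi F 0 (div_pos hα hβ)
  rw [mul_zero] at step2
  have step3 : ∀ u ∈ Ioi (0:ℝ), F (α/β*u) =
      (β/α) * ((m * (α ^ k)⁻¹ * (α/β) ^ a) * (u ^ (a-1) * (1+u) ^ (-k))) := by
    intro u hu
    have hu' : 0 < u := hu
    have hw : 0 < α/β*u := by positivity
    have hab : 0 < α/β := div_pos hα hβ
    simp only [hF, hg0, smul_eq_mul, abs_of_pos hm]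
    rw [← Real.rpow_mul hw.le, ← Real.rpow_mul hw.le]
    have hmq : m * q = m * p + 1 := by
      have : m * q = m * p + m * (q - p) := by ring
      rw [this, hmqp]
    have hbw : β * (α/β*u) = α * u := by field_simp
    have key : α * (α/β*u) ^ (m*p) + β * (α/β*u) ^ (m*q)
        = α * (α/β*u) ^ (m*p) * (1+u) := by
      rw [hmq, Real.rpow_add hw, Real.rpow_one]
      calc α * (α/β*u) ^ (m*p) + β * ((α/β*u) ^ (m*p) * (α/β*u))
          = α * (α/β*u) ^ (m*p) + (β * (α/β*u)) * (α/β*u) ^ (m*p) := by ring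
        _ = α * (α/β*u) ^ (m*p) * (1+u) := by rw [hbw]; ring
    rw [key]
    have hwp : (0:ℝ) < (α/β*u) ^ (m*p) := Real.rpow_pos_of_pos hw _
    have hpow : ((α * (α/β*u) ^ (m*p) * (1+u)) ^ k)⁻¹
        = (α ^ k)⁻¹ * ((α/β*u) ^ (-(m*p*k)) * (1+u) ^ (-k)) := by
      rw [Real.mul_rpow (by positivity) (by positivity), Real.mul_rpow hα.le hwp.le,
        ← Real.rpow_mul hw.le, mul_inv, mul_inv, ← Real.rpow_neg hw.le,
        ← Real.rpow_neg (x := 1+u) (by positivity)]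
      rw [show (m*p)*k = m*p*k from by ring]
      ring
    rw [hpow]
    have hcomb : (α/β*u) ^ (m-1) * (α/β*u) ^ (-(m*p*k)) = (α/β*u) ^ (a-1) := by
      rw [← Real.rpow_add hw]
      congr 1
      rw [ha_def, div_eq_mul_inv, ← hm_def]; ring
    have hsplit : (α/β*u) ^ (a-1) = (α/β) ^ (a-1) * u ^ (a-1) :=
      Real.mul_rpow hab.le hu'.le
    have habm : (α/β) ^ (a-1) = (α/β) ^ a * (β/α) := by
      rw [Real.rpow_sub hab, Real.rpow_one, div_eq_mul_inv, inv_div]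
    calc m * (α/β*u) ^ (m-1) * ((α^k)⁻¹ * ((α/β*u) ^ (-(m*p*k)) * (1+u) ^ (-k)))
        = m * (α^k)⁻¹ * ((α/β*u) ^ (m-1) * (α/β*u) ^ (-(m*p*k))) * (1+u) ^ (-k) := by ring
      _ = m * (α^k)⁻¹ * ((α/β) ^ a * (β/α) * u ^ (a-1)) * (1+u) ^ (-k) := by
          rw [hcomb, hsplit, habm]
      _ = (β/α) * ((m * (α ^ k)⁻¹ * (α/β) ^ a) * (u ^ (a-1) * (1+u) ^ (-k))) := by ring
  rw [setIntegral_congr_fun measurableSet_Ioi step3] at step2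
  rw [MeasureTheory.integral_const_mul, MeasureTheory.integral_const_mul, step1] at step2
  have hba : (β/α) ≠ 0 := by positivity
  rw [smul_eq_mul] at step2
  have : (α/β)⁻¹ = β/α := by rw [inv_div]
  rw [this] at step2
  have h5 := mul_left_cancel₀ hba step2
  rw [← h5]
open MeasureTheory Real Set intervalIntegral

lemma contAt {α β p q k : ℝ} (hα : 0 < α) (hβ : 0 < β) {s : ℝ} (hs' : 0 < s) :
    ContinuousAt (fun s : ℝ => ((α * s ^ p + β * s ^ q) ^ k)⁻¹) s := by
  have h1 : ContinuousAt (fun s : ℝ => ((α * s ^ p + β * s ^ q) ^ k)⁻¹) s := by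
    have hsum : ContinuousAt (fun s : ℝ => α * s ^ p + β * s ^ q) s :=
      ((continuousAt_const.mul (Real.continuousAt_rpow_const s p (Or.inl hs'.ne'))).add
        (continuousAt_const.mul (Real.continuousAt_rpow_const s q (Or.inl hs'.ne'))))
    have hpos : 0 < α * s ^ p + β * s ^ q := by
      have := Real.rpow_pos_of_pos hs' p
      have := Real.rpow_pos_of_pos hs' q
      positivity
    exact (hsum.rpow_const (Or.inl hpos.ne')).inv₀
      (Real.rpow_pos_of_pos hpos k).ne'
  exact h1

lemma contOn {α β p q k : ℝ} (hα : 0 < α) (hβ : 0 < β) :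
    ContinuousOn (fun s : ℝ => ((α * s ^ p + β * s ^ q) ^ k)⁻¹) (Ioi 0) :=
  fun s hs => (contAt hα hβ hs).continuousWithinAt

lemma integrableOnIoi {α β p q k : ℝ} (hα : 0 < α) (hβ : 0 < β) (hp : 0 < p) (hq : 0 < q)
    (hk : 0 < k) (hkp : k * p < 1) (hkq : 1 < k * q) :
    IntegrableOn (fun s : ℝ => ((α * s ^ p + β * s ^ q) ^ k)⁻¹) (Ioi 0) := by
  set f : ℝ → ℝ := fun s => ((α * s ^ p + β * s ^ q) ^ k)⁻¹ with hf
  have hbound : ∀ s : ℝ, 0 < s → ∀ r c, 0 < c → c * s ^ r ≤ α * s ^ p + β * s ^ q →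
      ‖f s‖ ≤ c⁻¹ * s ^ (-(k*r)) → True := fun _ _ _ _ _ _ _ => trivial
  -- bound on (0,1]
  have key : ∀ (r c : ℝ), 0 < c →
      ∀ s : ℝ, 0 < s → c * s ^ r ≤ α * s ^ p + β * s ^ q →
      ‖f s‖ ≤ c⁻¹ ^ k * s ^ (-(r*k)) := by
    intro r c hc s hs hle
    have hsr := Real.rpow_pos_of_pos hs r
    have hcs : 0 < c * s ^ r := by positivity
    have hsum : 0 < α * s ^ p + β * s ^ q := lt_of_lt_of_le hcs hle
    have h1 : (c * s ^ r) ^ k ≤ (α * s ^ p + β * s ^ q) ^ k :=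
      Real.rpow_le_rpow hcs.le hle hk.le
    have h2 : f s ≤ ((c * s ^ r) ^ k)⁻¹ := by
      have := Real.rpow_pos_of_pos hcs k
      exact inv_anti₀ (by positivity) h1
    have h3 : ((c * s ^ r) ^ k)⁻¹ = c⁻¹ ^ k * s ^ (-(r*k)) := by
      rw [Real.mul_rpow hc.le (Real.rpow_nonneg hs.le r), ← Real.rpow_mul hs.le,
        mul_inv, ← Real.rpow_neg hs.le, ← Real.inv_rpow hc.le]
    have hfk := Real.rpow_pos_of_pos hsum k
    rw [Real.norm_eq_abs, abs_of_nonneg (by positivity)]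
    rw [← h3]; exact h2
  have meas : AEStronglyMeasurable f (volume.restrict (Ioi (0:ℝ))) :=
    (contOn hα hβ).aestronglyMeasurable measurableSet_Ioi
  have part1 : IntegrableOn f (Ioc 0 1) := by
    have hint : IntegrableOn (fun s : ℝ => α⁻¹ ^ k * s ^ (-(p*k))) (Ioc 0 1) := by
      apply Integrable.const_mul
      have := intervalIntegral.intervalIntegrable_rpow' (a := 0) (b := 1) (r := -(p*k))
        (by nlinarith)
      rwa [intervalIntegrable_iff_integrableOn_Ioc_of_le (by norm_num)] at this
    refine Integrable.mono' hint (meas.mono_set Ioc_subset_Ioi_self) ?_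
    filter_upwards [ae_restrict_mem measurableSet_Ioc] with s hs
    refine key p α hα s hs.1 ?_
    have := Real.rpow_pos_of_pos hs.1 q
    nlinarith
  have part2 : IntegrableOn f (Ioi 1) := by
    have hint : IntegrableOn (fun s : ℝ => β⁻¹ ^ k * s ^ (-(q*k))) (Ioi 1) := by
      apply Integrable.const_mul
      exact integrableOn_Ioi_rpow_of_lt (by nlinarith) one_pos
    refine Integrable.mono' hint (meas.mono_set (Ioi_subset_Ioi zero_le_one)) ?_
    filter_upwards [ae_restrict_mem measurableSet_Ioi] with s hs
    have hs1 : (1:ℝ) < s := hs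
    refine key q β hβ s (lt_trans one_pos hs1) ?_
    have := Real.rpow_pos_of_pos (lt_trans one_pos hs1) p
    nlinarith
  have : Ioc (0:ℝ) 1 ∪ Ioi 1 = Ioi 0 := Ioc_union_Ioi_eq_Ioi (by norm_num)
  rw [← this]
  exact part1.union part2

lemma integralValue {α β p q k : ℝ} (hα : 0 < α) (hβ : 0 < β) (hp : 0 < p) (hq : 0 < q)
    (hk : 0 < k) (hkp : k * p < 1) (hkq : 1 < k * q) :
    ∫ s in Ioi (0:ℝ), ((α * s ^ p + β * s ^ q) ^ k)⁻¹ =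
      Real.Gamma ((1 - k * p) / (q - p)) * Real.Gamma ((k * q - 1) / (q - p)) /
        (α ^ k * Real.Gamma k * (q - p)) * (α / β) ^ ((1 - k * p) / (q - p)) := by
  have hqp : p < q := by
    rcases lt_or_ge p q with h | h
    · exact h
    · exfalso; nlinarith
  have hqp' : (0:ℝ) < q - p := by linarith
  set a : ℝ := (1 - k * p) / (q - p) with ha_def
  set b : ℝ := (k * q - 1) / (q - p) with hb_def
  have ha : 0 < a := div_pos (by linarith) hqp'
  have hb : 0 < b := div_pos (by linarith) hqp'
  have hab : a + b = k := by
    rw [ha_def, hb_def, ← add_div, div_eq_iff hqp'.ne']; ring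
  have hJ : ∫ u in Ioi (0:ℝ), u ^ (a - 1) * (1 + u) ^ (-k)
      = Real.Gamma a * Real.Gamma b / Real.Gamma k := by
    rw [← hab]
    rw [show (∫ u in Ioi (0:ℝ), u ^ (a - 1) * (1 + u) ^ (-(a+b)))
        = ∫ t in Ioo (0:ℝ) 1, t ^ (a-1) * (1-t) ^ (b-1) from betaIoi ha hb]
    exact betaReal ha hb
  rw [mainSubst hα hβ hp hq hk hqp, hJ]
  have hΓk : (0:ℝ) < Real.Gamma k := Real.Gamma_pos_of_pos hk
  have hαk : (0:ℝ) < α ^ k := Real.rpow_pos_of_pos hα k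
  field_simp
  rw [ha_def, mul_comm p k]

/-- Comparison lemma: a differentiable nonnegative scalar function `y` on
`[0,∞)` whose derivative satisfies `y' ≤ -(γ/T_c)(α y^p + β y^q)^k` whenever `y > 0`
vanishes for all `t ≥ T_c`. -/
theorem scalar_comparison_predefined_time
    (α β p q k : ℝ) (hα : 0 < α) (hβ : 0 < β) (hp : 0 < p) (hq : 0 < q) (hk : 0 < k)
    (hkp : k * p < 1) (hkq : 1 < k * q)
    (Tc : ℝ) (hTc : 0 < Tc)
    (y y' : ℝ → ℝ)
    (hnonneg : ∀ t, 0 ≤ t → 0 ≤ y t)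
    (hderiv : ∀ t, 0 ≤ t → HasDerivAt y (y' t) t)
    (hineq : ∀ t, 0 ≤ t → 0 < y t →
      y' t ≤
        -(Real.Gamma ((1 - k * p) / (q - p)) * Real.Gamma ((k * q - 1) / (q - p)) /
            (α ^ k * Real.Gamma k * (q - p)) * (α / β) ^ ((1 - k * p) / (q - p)) / Tc) *
          (α * y t ^ p + β * y t ^ q) ^ k) :
    ∀ t, Tc ≤ t → y t = 0 := by
  have hqp : p < q := by nlinarith
  have hqp' : (0:ℝ) < q - p := by linarith
  set γ : ℝ := Real.Gamma ((1 - k * p) / (q - p)) * Real.Gamma ((k * q - 1) / (q - p)) /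
      (α ^ k * Real.Gamma k * (q - p)) * (α / β) ^ ((1 - k * p) / (q - p)) with hγ_def
  have hγ : 0 < γ := by
    have h1 := Real.Gamma_pos_of_pos (div_pos (by linarith : (0:ℝ) < 1 - k*p) hqp')
    have h2 := Real.Gamma_pos_of_pos (div_pos (by linarith : (0:ℝ) < k*q - 1) hqp')
    have h3 := Real.Gamma_pos_of_pos hk
    have h4 := Real.rpow_pos_of_pos hα k
    have h5 := Real.rpow_pos_of_pos (div_pos hα hβ) ((1 - k * p) / (q - p))
    rw [hγ_def]; positivity
  set c : ℝ := γ / Tc with hc_def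
  have hc : 0 < c := div_pos hγ hTc
  set f : ℝ → ℝ := fun s => (α * s ^ p + β * s ^ q) ^ k with hf_def
  set h : ℝ → ℝ := fun s => c⁻¹ * ((α * s ^ p + β * s ^ q) ^ k)⁻¹ with hh_def
  have hfnn : ∀ s : ℝ, 0 ≤ s → 0 ≤ f s := fun s hs =>
    Real.rpow_nonneg (by
      have := Real.rpow_nonneg hs p; have := Real.rpow_nonneg hs q; positivity) k
  have hfpos : ∀ s : ℝ, 0 < s → 0 < f s := fun s hs =>
    Real.rpow_pos_of_pos (by
      have := Real.rpow_pos_of_pos hs p; have := Real.rpow_pos_of_pos hs q; positivity) k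
  have hhnn : ∀ s : ℝ, 0 ≤ s → 0 ≤ h s := fun s hs => by
    have := hfnn s hs
    simp only [hh_def]
    positivity
  have hhpos : ∀ s : ℝ, 0 < s → 0 < h s := fun s hs => by
    have := hfpos s hs
    simp only [hh_def, hf_def] at this ⊢
    positivity
  have hint : IntegrableOn h (Ioi 0) := (integrableOnIoi hα hβ hp hq hk hkp hkq).const_mul c⁻¹
  have hval : ∫ s in Ioi (0:ℝ), h s = Tc := by
    rw [hh_def]
    rw [MeasureTheory.integral_const_mul, integralValue hα hβ hp hq hk hkp hkq, ← hγ_def,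
      hc_def]
    field_simp
  -- interval integrability
  have hII : ∀ u : ℝ, 0 ≤ u → IntervalIntegrable h volume 0 u := by
    intro u hu
    rw [intervalIntegrable_iff_integrableOn_Ioc_of_le hu]
    exact hint.mono_set Ioc_subset_Ioi_self
  set H : ℝ → ℝ := fun u => ∫ s in (0:ℝ)..u, h s with hH_def
  have hHderiv : ∀ u : ℝ, 0 < u → HasDerivAt H (h u) u := by
    intro u hu
    refine intervalIntegral.integral_hasDerivAt_right (hII u hu.le) ?_ ?_
    · exact ⟨Ioi 0, Ioi_mem_nhds hu,
        ((contOn hα hβ).const_smul c⁻¹).aestronglyMeasurable measurableSet_Ioi⟩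
    · exact continuousAt_const.mul (contAt hα hβ hu)
  have hH0 : ∀ u : ℝ, 0 ≤ u → 0 ≤ H u := fun u hu =>
    intervalIntegral.integral_nonneg hu (fun s hs => hhnn s hs.1)
  have hHlt : ∀ u : ℝ, 0 ≤ u → H u < Tc := by
    intro u hu
    have hsplit : (∫ s in Ioi (0:ℝ), h s)
        = (∫ s in Ioc (0:ℝ) u, h s) + ∫ s in Ioi u, h s := by
      rw [← MeasureTheory.setIntegral_union (Ioc_disjoint_Ioi le_rfl) measurableSet_Ioi
        (hint.mono_set Ioc_subset_Ioi_self) (hint.mono_set (Ioi_subset_Ioi hu)),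
        Ioc_union_Ioi_eq_Ioi hu]
    have htail : 0 < ∫ s in Ioi u, h s := by
      rw [MeasureTheory.setIntegral_pos_iff_support_of_nonneg_ae]
      · have hsub : Ioi u ⊆ Function.support h := fun s hs =>
          (hhpos s (lt_of_le_of_lt hu hs)).ne'
        rw [Set.inter_eq_right.mpr hsub, Real.volume_Ioi]
        norm_num
      · filter_upwards [ae_restrict_mem measurableSet_Ioi] with s hs
        exact hhnn s (hu.trans (le_of_lt hs))
      · exact hint.mono_set (Ioi_subset_Ioi hu)
    have : H u = ∫ s in Ioc (0:ℝ) u, h s := intervalIntegral.integral_of_le hu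
    rw [this, ← hval, hsplit]
    linarith
  intro t0 ht0
  by_contra hne
  have ht0' : 0 ≤ t0 := hTc.le.trans ht0
  have hy0 : 0 < y t0 := lt_of_le_of_ne (hnonneg t0 ht0') (Ne.symm hne)
  have hycont : ContinuousOn y (Icc 0 t0) := fun t ht =>
    (hderiv t ht.1).continuousAt.continuousWithinAt
  by_cases hzero : ∃ s ∈ Icc (0:ℝ) t0, y s = 0
  · -- case B
    set S : Set ℝ := Icc 0 t0 ∩ y ⁻¹' {0} with hS_def
    have hSclosed : IsClosed S :=
      hycont.preimage_isClosed_of_isClosed isClosed_Icc isClosed_singleton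
    have hScomp : IsCompact S :=
      isCompact_Icc.of_isClosed_subset hSclosed Set.inter_subset_left
    obtain ⟨s₀, hs₀, hys₀⟩ := hzero
    have hSne : S.Nonempty := ⟨s₀, hs₀, hys₀⟩
    set s := sSup S with hs_def
    have hsS : s ∈ S := hScomp.sSup_mem hSne
    have hs_mem : s ∈ Icc 0 t0 := hsS.1
    have hys : y s = 0 := hsS.2
    have hst0 : s < t0 := lt_of_le_of_ne hs_mem.2 (fun hcontra => by
      rw [hcontra] at hys; exact hy0.ne' hys)
    have hpos_on : ∀ t ∈ Ioc s t0, 0 < y t := by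
      intro t ht
      have ht0le : 0 ≤ t := hs_mem.1.trans ht.1.le
      rcases (hnonneg t ht0le).lt_or_eq with hlt | heq
      · exact hlt
      · exfalso
        have : t ∈ S := ⟨⟨ht0le, ht.2⟩, heq.symm⟩
        have := le_csSup hScomp.bddAbove this
        exact absurd this (not_le.mpr ht.1)
    have hanti : AntitoneOn y (Icc s t0) := by
      refine antitoneOn_of_hasDerivWithinAt_nonpos (convex_Icc s t0)
        (hycont.mono (Icc_subset_Icc_left hs_mem.1)) (f' := y') ?_ ?_
      · intro x hx
        rw [interior_Icc] at hx
        exact (hderiv x (hs_mem.1.trans hx.1.le)).hasDerivWithinAt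
      · intro x hx
        rw [interior_Icc] at hx
        have hx0 : 0 ≤ x := hs_mem.1.trans hx.1.le
        have hxpos : 0 < y x := hpos_on x ⟨hx.1, hx.2.le⟩
        have hle := hineq x hx0 hxpos
        have hf' := hfnn (y x) hxpos.le
        simp only [hf_def] at hf'
        nlinarith
    have := hanti (left_mem_Icc.mpr hs_mem.2) (right_mem_Icc.mpr hs_mem.2) hs_mem.2
    rw [hys] at this
    exact absurd this (not_le.mpr hy0)
  · -- case A
    push_neg at hzero
    have hypos : ∀ t ∈ Icc (0:ℝ) t0, 0 < y t := fun t ht =>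
      lt_of_le_of_ne (hnonneg t ht.1) (Ne.symm (hzero t ht))
    set φ : ℝ → ℝ := fun t => H (y t) + t with hφ_def
    have hφderiv : ∀ t ∈ Icc (0:ℝ) t0, HasDerivAt φ (h (y t) * y' t + 1) t := by
      intro t ht
      have h1 : HasDerivAt (fun t => H (y t)) (h (y t) * y' t) t :=
        (hHderiv (y t) (hypos t ht)).comp t (hderiv t ht.1)
      exact h1.add (hasDerivAt_id' t)
    have hφ'le : ∀ t ∈ Icc (0:ℝ) t0, h (y t) * y' t + 1 ≤ 0 := by
      intro t ht
      have hyt := hypos t ht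
      have hi := hineq t ht.1 hyt
      have hfy : 0 < (α * y t ^ p + β * y t ^ q) ^ k := hfpos (y t) hyt
      have hhy : 0 < h (y t) := hhpos (y t) hyt
      have h2 : h (y t) * y' t ≤ h (y t) * (-c * (α * y t ^ p + β * y t ^ q) ^ k) :=
        mul_le_mul_of_nonneg_left hi hhy.le
      have h3 : h (y t) * (-c * (α * y t ^ p + β * y t ^ q) ^ k) = -1 := by
        simp only [hh_def]
        field_simp
      linarith
    have hanti : AntitoneOn φ (Icc 0 t0) := by
      refine antitoneOn_of_hasDerivWithinAt_nonpos (convex_Icc 0 t0)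
        (fun t ht => (hφderiv t ht).continuousAt.continuousWithinAt)
        (f' := fun t => h (y t) * y' t + 1) ?_ ?_
      · intro x hx
        rw [interior_Icc] at hx
        exact (hφderiv x ⟨hx.1.le, hx.2.le⟩).hasDerivWithinAt
      · intro x hx
        rw [interior_Icc] at hx
        exact hφ'le x ⟨hx.1.le, hx.2.le⟩
    have hend := hanti (left_mem_Icc.mpr ht0') (right_mem_Icc.mpr ht0') ht0'
    simp only [hφ_def] at hend
    have h1 : 0 ≤ H (y t0) := hH0 (y t0) hy0.le
    have h2 : H (y 0) < Tc := hHlt (y 0) (hnonneg 0 le_rfl)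
    linarith
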